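/- Let a, σ > 0 and b ≥ 0, define k(x) := √(a² + 2(1+b·x)·σ²) for x ≥ 0, and set x* := (b − a + √((b−a)² + 2σ²))/σ². Then for every x ≥ 0: max(x, (k(x)−a)/σ²) = (k(x)−a)/σ² if x ≤ x*, and max(x, (k(x)−a)/σ²) = x if x ≥ x*. Consequently, for any w̄₀ ≥ 0, the sequence defined by w̄ⱼ₊₁ := max(w̄ⱼ, (k(w̄ⱼ)−a)/σ²) is nondecreasing, bounded above by max(w̄₀, x*), and therefore converges to a finite limit. -/
import Mathlib


/-- k(x) := √(a² + 2(1+b·x)·σ²). -/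
noncomputable def kfun (a b σ x : ℝ) : ℝ := Real.sqrt (a ^ 2 + 2 * (1 + b * x) * σ ^ 2)

lemma kfun_sq (a b σ x : ℝ) (hb : 0 ≤ b) (hx : 0 ≤ x) :
    (kfun a b σ x) ^ 2 = a ^ 2 + 2 * (1 + b * x) * σ ^ 2 := by
  have : 0 ≤ a ^ 2 + 2 * (1 + b * x) * σ ^ 2 := by positivity
  exact Real.sq_sqrt this

lemma kfun_nonneg (a b σ x : ℝ) : 0 ≤ kfun a b σ x := Real.sqrt_nonneg _

lemma key_iff (a b σ : ℝ) (ha : 0 < a) (hσ : 0 < σ) (hb : 0 ≤ b)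
    (x : ℝ) (hx : 0 ≤ x) :
    x ≤ (b - a + Real.sqrt ((b - a) ^ 2 + 2 * σ ^ 2)) / σ ^ 2 ↔
      x ≤ (kfun a b σ x - a) / σ ^ 2 := by
  set s := Real.sqrt ((b - a) ^ 2 + 2 * σ ^ 2) with hs
  have hs0 : 0 ≤ s := Real.sqrt_nonneg _
  have hs2 : s ^ 2 = (b - a) ^ 2 + 2 * σ ^ 2 := Real.sq_sqrt (by positivity)
  set k := kfun a b σ x with hk
  have hk0 : 0 ≤ k := kfun_nonneg a b σ x
  have hk2 : k ^ 2 = a ^ 2 + 2 * (1 + b * x) * σ ^ 2 := kfun_sq a b σ x hb hx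
  have hσ2 : (0:ℝ) < σ ^ 2 := by positivity
  rw [le_div_iff₀ hσ2, le_div_iff₀ hσ2]
  constructor
  · intro h
    -- x * σ² ≤ b - a + s, show x * σ² ≤ k - a
    have habs : |b - a| ≤ s := by
      rw [hs, ← Real.sqrt_sq_eq_abs]
      exact Real.sqrt_le_sqrt (by nlinarith)
    have hba : b - a - s ≤ 0 := by
      have := le_abs_self (b - a); linarith
    have hprod : 0 ≤ (b - a + s - σ ^ 2 * x) * (σ ^ 2 * x - (b - a - s)) := by
      apply mul_nonneg
      · nlinarith
      · nlinarith [mul_nonneg hσ2.le hx]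
    have hsq : (σ ^ 2 * x + a) ^ 2 ≤ k ^ 2 := by nlinarith
    nlinarith [mul_nonneg hσ2.le hx]
  · intro h
    -- σ²x + a ≤ k, show x σ² ≤ b - a + s
    nlinarith [sq_nonneg (s - (σ ^ 2 * x - (b - a))), sq_nonneg (s + (σ ^ 2 * x - (b - a))),
      mul_nonneg hs0 (mul_nonneg hσ2.le hx)]

lemma fx_le_x (a b σ : ℝ) (ha : 0 < a) (hσ : 0 < σ) (hb : 0 ≤ b)
    (x : ℝ) (hx : 0 ≤ x)
    (hge : (b - a + Real.sqrt ((b - a) ^ 2 + 2 * σ ^ 2)) / σ ^ 2 ≤ x) :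
    (kfun a b σ x - a) / σ ^ 2 ≤ x := by
  set s := Real.sqrt ((b - a) ^ 2 + 2 * σ ^ 2) with hs
  have hs0 : 0 ≤ s := Real.sqrt_nonneg _
  have hs2 : s ^ 2 = (b - a) ^ 2 + 2 * σ ^ 2 := Real.sq_sqrt (by positivity)
  have hk0 : 0 ≤ kfun a b σ x := kfun_nonneg a b σ x
  have hk2 : (kfun a b σ x) ^ 2 = a ^ 2 + 2 * (1 + b * x) * σ ^ 2 := kfun_sq a b σ x hb hx
  have hσ2 : (0:ℝ) < σ ^ 2 := by positivity
  rw [div_le_iff₀ hσ2] at hge ⊢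
  have h1 : b - a + s ≤ x * σ ^ 2 := hge
  nlinarith [sq_nonneg (kfun a b σ x - (σ ^ 2 * x + a)),
    mul_nonneg hs0 (mul_nonneg hσ2.le hx)]

lemma fx_le_xstar (a b σ : ℝ) (ha : 0 < a) (hσ : 0 < σ) (hb : 0 ≤ b)
    (x : ℝ) (hx : 0 ≤ x)
    (hle : x ≤ (b - a + Real.sqrt ((b - a) ^ 2 + 2 * σ ^ 2)) / σ ^ 2) :
    (kfun a b σ x - a) / σ ^ 2 ≤ (b - a + Real.sqrt ((b - a) ^ 2 + 2 * σ ^ 2)) / σ ^ 2 := by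
  set s := Real.sqrt ((b - a) ^ 2 + 2 * σ ^ 2) with hs
  have hs0 : 0 ≤ s := Real.sqrt_nonneg _
  have hs2 : s ^ 2 = (b - a) ^ 2 + 2 * σ ^ 2 := Real.sq_sqrt (by positivity)
  have hk0 : 0 ≤ kfun a b σ x := kfun_nonneg a b σ x
  have hk2 : (kfun a b σ x) ^ 2 = a ^ 2 + 2 * (1 + b * x) * σ ^ 2 := kfun_sq a b σ x hb hx
  have hσ2 : (0:ℝ) < σ ^ 2 := by positivity
  rw [le_div_iff₀ hσ2] at hle
  rw [div_le_div_iff₀ hσ2 hσ2]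
  -- (k - a) σ² ≤ (b - a + s) σ², i.e. k ≤ b + s
  have hbs : 0 ≤ b + s := by nlinarith [sq_nonneg (s - (b - a)), sq_nonneg (s - (a - b))]
  have : kfun a b σ x ≤ b + s := by
    nlinarith [sq_nonneg (kfun a b σ x - (b + s)), mul_nonneg hs0 hb]
  nlinarith

/-- with x* := (b − a + √((b−a)² + 2σ²))/σ², one has
max(x, (k(x)−a)/σ²) = (k(x)−a)/σ² for 0 ≤ x ≤ x* and = x for x ≥ x*; hence any
sequence w̄ with w̄ⱼ₊₁ = max(w̄ⱼ, (k(w̄ⱼ)−a)/σ²) and w̄₀ ≥ 0 is nondecreasing,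
bounded above by max(w̄₀, x*), and converges to a finite limit. -/
theorem wbar_sequence_converges
    (a b σ : ℝ) (ha : 0 < a) (hσ : 0 < σ) (hb : 0 ≤ b)
    (wbar : ℕ → ℝ) (h0 : 0 ≤ wbar 0)
    (hrec : ∀ j : ℕ, wbar (j + 1) = max (wbar j) ((kfun a b σ (wbar j) - a) / σ ^ 2)) :
    (∀ x ≥ (0 : ℝ),
      (x ≤ (b - a + Real.sqrt ((b - a) ^ 2 + 2 * σ ^ 2)) / σ ^ 2 →
        max x ((kfun a b σ x - a) / σ ^ 2) = (kfun a b σ x - a) / σ ^ 2) ∧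
      ((b - a + Real.sqrt ((b - a) ^ 2 + 2 * σ ^ 2)) / σ ^ 2 ≤ x →
        max x ((kfun a b σ x - a) / σ ^ 2) = x)) ∧
    Monotone wbar ∧
    (∀ j : ℕ, wbar j ≤ max (wbar 0) ((b - a + Real.sqrt ((b - a) ^ 2 + 2 * σ ^ 2)) / σ ^ 2)) ∧
    ∃ L : ℝ, Filter.Tendsto wbar Filter.atTop (nhds L) := by
  set xs := (b - a + Real.sqrt ((b - a) ^ 2 + 2 * σ ^ 2)) / σ ^ 2 with hxs
  have hpos : ∀ j, 0 ≤ wbar j := by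
    intro j
    induction j with
    | zero => exact h0
    | succ n ih => rw [hrec n]; exact le_trans ih (le_max_left _ _)
  have hmono : Monotone wbar := by
    apply monotone_nat_of_le_succ
    intro n
    rw [hrec n]; exact le_max_left _ _
  have hbd : ∀ j, wbar j ≤ max (wbar 0) xs := by
    intro j
    induction j with
    | zero => exact le_max_left _ _
    | succ n ih =>
      rw [hrec n]
      apply max_le ih
      by_cases hc : wbar n ≤ xs
      · exact le_trans (fx_le_xstar a b σ ha hσ hb _ (hpos n) hc) (le_max_right _ _)
      · push_neg at hc
        exact le_trans (fx_le_x a b σ ha hσ hb _ (hpos n) hc.le) ih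
  refine ⟨?_, hmono, hbd, ?_⟩
  · intro x hx
    constructor
    · intro hle
      exact max_eq_right ((key_iff a b σ ha hσ hb x hx).mp hle)
    · intro hge
      exact max_eq_left (fx_le_x a b σ ha hσ hb x hx hge)
  · exact ⟨_, tendsto_atTop_ciSup hmono ⟨max (wbar 0) xs, by rintro _ ⟨j, rfl⟩; exact hbd j⟩⟩
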